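/- Let n ≥ 2 be an integer and let x, x', y, y' ∈ ZMod n with Z := d(y', y). If d(x', y') + d(y', y) + d(y, x) ≥ d(x', x) + n (i.e., the cyclic order of the four points is not x', y', y, x), then 2·d(y, x) + 2·d(x', y') + f(x, x') ≥ ⌊n/2⌋·⌊(n−1)/2⌋ + n − 1 − 2Z + 2n. -/
import Mathlib

/-- `C2 x` is the binomial-type expression `x(x-1)/2`. -/
def C2 (x : ℤ) : ℤ := x * (x - 1) / 2

/-- `dz x y` is the least nonnegative residue of `y - x` modulo `n`. -/
def dz {n : ℕ} (x y : ZMod n) : ℕ := (y - x).val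

/-- `fz x y = C(d(x,y),2) + C(n - d(x,y),2)` for `x y : ZMod n`. -/
def fz {n : ℕ} (x y : ZMod n) : ℤ := C2 (dz x y) + C2 ((n : ℤ) - dz x y)

lemma mul_pred_nonneg (t : ℤ) : 0 ≤ t * (t - 1) := by
  rcases le_or_gt 1 t with h | h
  · exact mul_nonneg (by linarith) (by linarith)
  · nlinarith

lemma two_C2 (x : ℤ) : 2 * C2 x = x * (x - 1) := by
  unfold C2
  have : Even (x * (x - 1)) := by
    have := Int.even_mul_succ_self (x - 1)
    have h : (x - 1) * (x - 1 + 1) = x * (x - 1) := by ring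
    rwa [h] at this
  exact Int.two_mul_ediv_two_of_even this

theorem stmt_6 (n : ℕ) (hn : 2 ≤ n) (x x' y y' : ZMod n) (Z : ℕ) (hZ : Z = dz y' y)
    (horder : dz x' y' + dz y' y + dz y x ≥ dz x' x + n) :
    ((n / 2 : ℕ) : ℤ) * (((n - 1) / 2 : ℕ) : ℤ) + n - 1 - 2 * Z + 2 * n ≤
      2 * (dz y x : ℤ) + 2 * (dz x' y' : ℤ) + fz x x' := by
  have hnz : NeZero n := ⟨by omega⟩
  -- sum of opposite distances is 0 or n
  have hm : dz x x' + dz x' x = 0 ∨ dz x x' + dz x' x = n := by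
    have h1 : dz x x' < n := ZMod.val_lt _
    have h2 : dz x' x < n := ZMod.val_lt _
    have h3 : ((x' - x) + (x - x')).val = ((x' - x).val + (x - x').val) % n :=
      ZMod.val_add _ _
    rw [show (x' - x) + (x - x') = 0 by ring, ZMod.val_zero] at h3
    have e1 : dz x x' = (x' - x).val := rfl
    have e2 : dz x' x = (x - x').val := rfl
    rw [e1, e2]
    obtain ⟨k, hk⟩ := Nat.dvd_of_mod_eq_zero h3.symm
    have hk2 : k < 2 := by
      by_contra h
      push_neg at h
      have : n * 2 ≤ n * k := Nat.mul_le_mul_left n h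
      omega
    interval_cases k <;> omega
  subst hZ
  have H : (dz x' x : ℤ) + n ≤ (dz x' y' : ℤ) + (dz y' y : ℤ) + (dz y x : ℤ) := by
    exact_mod_cast horder
  -- key: F + n - 1 ≤ 2 * c + fz x x'
  set m : ℕ := dz x x' with hmdef
  set c : ℕ := dz x' x with hcdef
  have hfz : fz x x' = C2 (m : ℤ) + C2 ((n : ℤ) - m) := rfl
  have hpq : (n / 2 : ℕ) + ((n - 1) / 2 : ℕ) + 1 = n ∧ ((n-1)/2 : ℕ) ≤ (n/2 : ℕ) ∧
      (n/2 : ℕ) ≤ ((n-1)/2 : ℕ) + 1 ∧ 1 ≤ (n/2 : ℕ) := by omega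
  obtain ⟨e1, e2, e3, e4⟩ := hpq
  set p : ℕ := n / 2
  set q : ℕ := (n - 1) / 2
  have E1 : (p : ℤ) + q + 1 = n := by exact_mod_cast e1
  have E2 : (q : ℤ) ≤ p := by exact_mod_cast e2
  have E3 : (p : ℤ) ≤ q + 1 := by exact_mod_cast e3
  have E4 : (1 : ℤ) ≤ p := by exact_mod_cast e4
  have hmlt : m < n := ZMod.val_lt _
  have hclt : c < n := ZMod.val_lt _
  have key : (p : ℤ) * q + n - 1 ≤ 2 * c + fz x x' := by
    rw [hfz]
    have t1 := two_C2 (m : ℤ)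
    have t2 := two_C2 ((n : ℤ) - m)
    rcases hm with h | h
    · have hm0 : (m : ℤ) = 0 := by omega
      have hc0 : (c : ℤ) = 0 := by omega
      nlinarith [mul_pred_nonneg (p : ℤ), mul_pred_nonneg (q : ℤ)]
    · have hc : (c : ℤ) = n - m := by
        have : (m : ℤ) + c = n := by exact_mod_cast h
        linarith
      have hm1 : (1 : ℤ) ≤ m := by omega
      nlinarith [mul_pred_nonneg ((m : ℤ) - q - 1), sq_nonneg ((p : ℤ) - q),
        sq_nonneg (2 * (m : ℤ) - n - 2), mul_pred_nonneg ((p : ℤ) - q)]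

  push_cast at key H
  linarith
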